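/- The number of ordered partitions of N into g parts, where every part is an integer from [0,B], is at least C(N - 2g' + g - 1, g - g' - 1), where g' = ⌊N/B⌋, assuming g - g' - 1 ≥ 0 and N - 2g' ≥ 0. -/

import Mathlib

open Finset

namespace OPBaux

/-! ### Stars and bars -/

lemma sum_replicate_count {k : ℕ} (m : Multiset (Fin k)) :
    ∑ i : Fin k, Multiset.replicate (m.count i) i = m := by
  have h1 : ∑ i ∈ m.toFinset, Multiset.replicate (m.count i) i = m := by
    simpa [Multiset.nsmul_singleton] using Multiset.toFinset_sum_count_nsmul_eq m
  conv_rhs => rw [← h1]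
  symm
  apply Finset.sum_subset (Finset.subset_univ m.toFinset)
  intro x _ hx
  simp [Multiset.count_eq_zero_of_notMem (by simpa using hx)]

def compSymEquiv (k S : ℕ) : {c : Fin k → ℕ // ∑ i, c i = S} ≃ Sym (Fin k) S where
  toFun c := ⟨∑ i : Fin k, Multiset.replicate (c.1 i) i, by
    show Multiset.cardHom _ = S
    rw [map_sum Multiset.cardHom]
    simp [Multiset.card_replicate, c.2]⟩
  invFun m := ⟨fun i => m.1.count i, by
    rw [show ∑ i : Fin k, m.1.count i = Multiset.card m.1 by simp [Multiset.toFinset_sum_count_eq]]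
    exact m.2⟩
  left_inv c := by
    ext i
    simp [Multiset.count_sum', Multiset.count_replicate, Finset.sum_ite_eq]
  right_inv m := by
    apply Subtype.ext
    exact sum_replicate_count m.1

lemma card_comps (k S : ℕ) (hk : 0 < k) :
    Nat.card {c : Fin k → ℕ // ∑ i, c i = S} = (S + k - 1).choose (k - 1) := by
  rw [Nat.card_congr (compSymEquiv k S), Nat.card_eq_fintype_card, Sym.card_sym_eq_choose,
    Fintype.card_fin]
  rw [show k + S - 1 = S + k - 1 by omega]
  rw [← Nat.choose_symm (by omega : S ≤ S + k - 1)]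
  congr 1
  omega

/-! ### Generic sorted list lemmas -/

lemma getD_mono {L : List ℕ} (h : L.Pairwise (· ≤ ·)) {i j : ℕ} (hij : i ≤ j) (hj : j < L.length) :
    L.getD i 0 ≤ L.getD j 0 := by
  rcases eq_or_lt_of_le hij with rfl | hlt
  · exact le_rfl
  · rw [List.getD_eq_getElem L 0 (lt_of_le_of_lt hij hj), List.getD_eq_getElem L 0 hj]
    exact List.pairwise_iff_getElem.mp h i j _ _ hlt

lemma tele {L : List ℕ} (h : L.Pairwise (· ≤ ·)) :
    ∀ m, m < L.length →
      ∑ i ∈ Finset.range m, (L.getD (i + 1) 0 - L.getD i 0) = L.getD m 0 - L.getD 0 0 := by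
  intro m
  induction m with
  | zero => simp
  | succ n ih =>
    intro hm
    rw [Finset.sum_range_succ, ih (by omega)]
    have h1 : L.getD 0 0 ≤ L.getD n 0 := getD_mono h (by omega) (by omega)
    have h2 : L.getD n 0 ≤ L.getD (n+1) 0 := getD_mono h (by omega) hm
    omega

/-! ### Partial sums and the shift map -/

def psiF (gp B v : ℕ) : ℕ := v + min gp ((v - 1) / (B - 1))

def psum {k : ℕ} (c : Fin k → ℕ) (m : ℕ) : ℕ := ((List.ofFn c).take m).sum

lemma psum_zero {k : ℕ} (c : Fin k → ℕ) : psum c 0 = 0 := rfl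

lemma psum_succ {k : ℕ} (c : Fin k → ℕ) {m : ℕ} (hm : m < k) :
    psum c (m + 1) = psum c m + c ⟨m, hm⟩ := by
  unfold psum
  rw [List.sum_take_succ _ m (by simpa using hm)]
  congr 1
  simp

lemma psum_mono {k : ℕ} (c : Fin k → ℕ) : Monotone (psum c) := by
  apply monotone_nat_of_le_succ
  intro m
  by_cases hm : m < k
  · rw [psum_succ c hm]; omega
  · unfold psum
    rw [List.take_of_length_le (by simpa using le_of_not_gt hm),
      List.take_of_length_le (by simp; omega)]

lemma psum_top {k : ℕ} (c : Fin k → ℕ) : psum c k = ∑ i, c i := by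
  unfold psum
  rw [List.take_of_length_le (by simp), List.sum_ofFn]

lemma psiF_mono (gp B : ℕ) : Monotone (psiF gp B) := by
  intro v w h
  unfold psiF
  have := Nat.div_le_div_right (c := B - 1) (Nat.sub_le_sub_right h 1)
  exact Nat.add_le_add h (le_min (min_le_left _ _) (le_trans (min_le_right _ _) this))

lemma psiF_inj {gp B : ℕ} {v w : ℕ} (h : psiF gp B v = psiF gp B w) : v = w := by
  rcases lt_trichotomy v w with hlt | he | hlt
  · exfalso
    have h2 : min gp ((v-1)/(B-1)) ≤ min gp ((w-1)/(B-1)) :=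
      min_le_min le_rfl (Nat.div_le_div_right (Nat.sub_le_sub_right (le_of_lt hlt) 1))
    unfold psiF at h
    omega
  · exact he
  · exfalso
    have h2 : min gp ((w-1)/(B-1)) ≤ min gp ((v-1)/(B-1)) :=
      min_le_min le_rfl (Nat.div_le_div_right (Nat.sub_le_sub_right (le_of_lt hlt) 1))
    unfold psiF at h
    omega

/-! ### The cut list -/

def forcedL (B gp : ℕ) : List ℕ := (List.range gp).map (fun b => (b+1)*B - 1)

def origL (B gp k : ℕ) (c : Fin k → ℕ) : List ℕ :=
  (List.range (k-1)).map (fun j => psiF gp B (psum c (j+1)))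

def midL (B gp k : ℕ) (c : Fin k → ℕ) : List ℕ :=
  Multiset.sort (↑(forcedL B gp ++ origL B gp k c) : Multiset ℕ) (· ≤ ·)

lemma sorted_origL (B gp k : ℕ) (c : Fin k → ℕ) : (origL B gp k c).Pairwise (· ≤ ·) := by
  rw [origL, List.pairwise_map]
  apply List.Pairwise.imp ?_ (List.pairwise_lt_range : (List.range (k-1)).Pairwise (· < ·))
  intro a b hab
  exact psiF_mono gp B (psum_mono c (by omega))

def theL (B gp k N : ℕ) (c : Fin k → ℕ) : List ℕ := 0 :: (midL B gp k c ++ [N])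

lemma length_midL (B gp k : ℕ) (c : Fin k → ℕ) : (midL B gp k c).length = gp + (k - 1) := by
  simp [midL, forcedL, origL]

lemma length_theL (B gp k N : ℕ) (c : Fin k → ℕ) (hk : 0 < k) :
    (theL B gp k N c).length = gp + k + 1 := by
  simp [theL, length_midL]
  omega

lemma mem_midL {B gp k : ℕ} {c : Fin k → ℕ} {x : ℕ} :
    x ∈ midL B gp k c ↔
      ((∃ b < gp, (b+1)*B - 1 = x) ∨ (∃ j < k - 1, psiF gp B (psum c (j+1)) = x)) := by
  simp [midL, forcedL, origL, Multiset.mem_sort]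

section
variable {B gp k N S : ℕ} {c : Fin k → ℕ}

lemma mem_midL_le (hgpB : gp * B ≤ N) (hS : S + gp = N) (hc : ∑ i, c i = S) :
    ∀ x ∈ midL B gp k c, x ≤ N := by
  intro x hx
  rcases mem_midL.mp hx with ⟨b, hb, rfl⟩ | ⟨j, hj, rfl⟩
  · have : (b+1) * B ≤ gp * B := Nat.mul_le_mul_right B (by omega)
    omega
  · have h1 : psiF gp B (psum c (j+1)) ≤ psum c (j+1) + gp := by
      unfold psiF; have := min_le_left gp ((psum c (j+1) - 1)/(B-1)); omega
    have h2 : psum c (j+1) ≤ S := by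
      rw [← hc, ← psum_top c]
      exact psum_mono c (by omega)
    omega

lemma sorted_theL (hgpB : gp * B ≤ N) (hS : S + gp = N) (hc : ∑ i, c i = S) :
    (theL B gp k N c).Pairwise (· ≤ ·) := by
  unfold theL
  rw [List.pairwise_cons]
  constructor
  · intro b _; exact Nat.zero_le b
  · rw [List.pairwise_append]
    refine ⟨Multiset.pairwise_sort _ _, by simp, ?_⟩
    intro x hx y hy
    simp at hy
    subst hy
    exact mem_midL_le hgpB hS hc x hx

lemma getD_zero_theL : (theL B gp k N c).getD 0 0 = 0 := rfl

lemma getD_last_theL (hk : 0 < k) : (theL B gp k N c).getD (gp + k) 0 = N := by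
  have hlen : (midL B gp k c).length = gp + (k - 1) := length_midL B gp k c
  rw [List.getD_eq_getElem _ 0 (by simp [theL]; omega)]
  simp only [theL]
  have hidx : gp + k = (midL B gp k c).length + 1 := by omega
  simp only [hidx, List.getElem_cons_succ]
  simp

lemma mem_theL_le (hgpB : gp * B ≤ N) (hS : S + gp = N) (hc : ∑ i, c i = S) :
    ∀ x ∈ theL B gp k N c, x ≤ N := by
  intro x hx
  rcases List.mem_cons.mp hx with rfl | hx
  · exact Nat.zero_le N
  · rcases List.mem_append.mp hx with hx | hx
    · exact mem_midL_le hgpB hS hc x hx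
    · simp at hx; omega

lemma gap_theL (hB : 0 < B) (hgp : gp = N / B) (hgpB : gp * B ≤ N) (hS : S + gp = N)
    (hc : ∑ i, c i = S) :
    ∀ i, i + 1 < (theL B gp k N c).length →
      (theL B gp k N c).getD (i+1) 0 ≤ (theL B gp k N c).getD i 0 + B := by
  intro i hi
  by_contra hcon
  push_neg at hcon
  set L := theL B gp k N c with hL
  set x := L.getD i 0 with hx
  set y := L.getD (i+1) 0 with hy
  have hsort : L.Pairwise (· ≤ ·) := sorted_theL hgpB hS hc
  have hyN : y ≤ N := by
    have : y ∈ L := by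
      rw [hy, List.getD_eq_getElem _ 0 hi]
      exact List.getElem_mem _
    exact mem_theL_le hgpB hS hc y this
  set b := (x + 1) / B with hb
  have hxv : x + 1 < (b + 1) * B := by
    have : (x+1)/B < b + 1 := by omega
    exact (Nat.div_lt_iff_lt_mul hB).mp this
  have hvx : b * B ≤ x + 1 := Nat.div_mul_le_self (x+1) B
  have hvB : (b+1) * B ≤ x + 1 + B := by
    have : (b+1) * B = b * B + B := by ring
    omega
  have hbgp : b + 1 ≤ gp := by
    rw [hgp]
    rw [Nat.le_div_iff_mul_le hB]
    omega
  -- the forced value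
  set v := (b+1) * B - 1 with hv
  have hxltv : x < v := by omega
  have hvlty : v < y := by omega
  have hvmem : v ∈ L := by
    apply List.mem_cons_of_mem
    apply List.mem_append_left
    exact mem_midL.mpr (Or.inl ⟨b, by omega, rfl⟩)
  obtain ⟨m, hmlt, hmv⟩ := List.mem_iff_getElem.mp hvmem
  have hmD : L.getD m 0 = v := by rw [List.getD_eq_getElem _ 0 hmlt, hmv]
  rcases le_or_gt m i with hmi | hmi
  · have : L.getD m 0 ≤ L.getD i 0 := getD_mono hsort hmi (by omega)
    omega
  · have : L.getD (i+1) 0 ≤ L.getD m 0 := getD_mono hsort (by omega) hmlt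
    omega

end
/-! ### The key injection -/

lemma key (B gp k S N g : ℕ) (hB : 0 < B) (hgp : gp = N / B) (hS : S + gp = N)
    (hg : g = gp + k) (hk : 0 < k) :
    Nat.card {c : Fin k → ℕ // ∑ i, c i = S} ≤
      Nat.card {a : Fin g → ℕ // (∀ i, a i ≤ B) ∧ ∑ i, a i = N} := by
  have hgpB : gp * B ≤ N := by rw [hgp]; exact Nat.div_mul_le_self N B
  have hfin : Finite {a : Fin g → ℕ // (∀ i, a i ≤ B) ∧ ∑ i, a i = N} := by
    have : Function.Injective (fun (a : {a : Fin g → ℕ // (∀ i, a i ≤ B) ∧ ∑ i, a i = N}) =>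
        (fun i => (⟨a.1 i, Nat.lt_succ_of_le (a.2.1 i)⟩ : Fin (B+1)) : Fin g → Fin (B+1))) := by
      intro a b h
      apply Subtype.ext; funext i
      exact congrArg Fin.val (congrFun h i)
    exact Finite.of_injective _ this
  have hPhi : ∀ c : {c : Fin k → ℕ // ∑ i, c i = S},
      (∀ j : Fin g, (theL B gp k N c.1).getD (j.1+1) 0 - (theL B gp k N c.1).getD j.1 0 ≤ B) ∧
      ∑ j : Fin g, ((theL B gp k N c.1).getD (j.1+1) 0 - (theL B gp k N c.1).getD j.1 0) = N := by
    intro c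
    have hlen := length_theL B gp k N c.1 hk
    have hsort := sorted_theL (c := c.1) hgpB hS c.2
    constructor
    · intro j
      have hj : j.1 < g := j.isLt
      have := gap_theL hB hgp hgpB hS c.2 j.1 (by omega)
      omega
    · rw [Fin.sum_univ_eq_sum_range
        (fun m => (theL B gp k N c.1).getD (m+1) 0 - (theL B gp k N c.1).getD m 0) g]
      rw [tele hsort g (by omega)]
      rw [getD_zero_theL, hg, getD_last_theL hk]
      omega
  have hinj : Function.Injective
      (fun (c : {c : Fin k → ℕ // ∑ i, c i = S}) =>
        (⟨fun j => (theL B gp k N c.1).getD (j.1+1) 0 - (theL B gp k N c.1).getD j.1 0,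
          hPhi c⟩ : {a : Fin g → ℕ // (∀ i, a i ≤ B) ∧ ∑ i, a i = N})) := by
    intro c c' heq
    have hfun : ∀ j : Fin g,
        (theL B gp k N c.1).getD (j.1+1) 0 - (theL B gp k N c.1).getD j.1 0 =
        (theL B gp k N c'.1).getD (j.1+1) 0 - (theL B gp k N c'.1).getD j.1 0 :=
      fun j => congrFun (congrArg Subtype.val heq) j
    have hlen := length_theL B gp k N c.1 hk
    have hlen' := length_theL B gp k N c'.1 hk
    have hsort := sorted_theL (c := c.1) hgpB hS c.2
    have hsort' := sorted_theL (c := c'.1) hgpB hS c'.2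
    have hgetD : ∀ m, m ≤ g → (theL B gp k N c.1).getD m 0 = (theL B gp k N c'.1).getD m 0 := by
      intro m hm
      have t1 := tele hsort m (by omega)
      have t2 := tele hsort' m (by omega)
      have hsum : ∑ i ∈ Finset.range m,
          ((theL B gp k N c.1).getD (i+1) 0 - (theL B gp k N c.1).getD i 0) =
          ∑ i ∈ Finset.range m,
          ((theL B gp k N c'.1).getD (i+1) 0 - (theL B gp k N c'.1).getD i 0) := by
        apply Finset.sum_congr rfl
        intro i hi
        have hig : i < g := by have := Finset.mem_range.mp hi; omega
        exact hfun ⟨i, hig⟩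
      have hz : (theL B gp k N c.1).getD 0 0 = 0 := getD_zero_theL
      have hz' : (theL B gp k N c'.1).getD 0 0 = 0 := getD_zero_theL
      have hm0 : (theL B gp k N c.1).getD 0 0 ≤ (theL B gp k N c.1).getD m 0 :=
        getD_mono hsort (by omega) (by omega)
      have hm0' : (theL B gp k N c'.1).getD 0 0 ≤ (theL B gp k N c'.1).getD m 0 :=
        getD_mono hsort' (by omega) (by omega)
      omega
    have hlists : theL B gp k N c.1 = theL B gp k N c'.1 := by
      apply List.ext_getElem (by omega)
      intro m h1 h2
      have := hgetD m (by omega)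
      rwa [List.getD_eq_getElem _ 0 h1, List.getD_eq_getElem _ 0 h2] at this
    have hmid : midL B gp k c.1 = midL B gp k c'.1 := by
      have h2 : midL B gp k c.1 ++ [N] = midL B gp k c'.1 ++ [N] := by
        have := hlists
        simp only [theL] at this
        exact List.tail_eq_of_cons_eq this
      exact (List.append_inj' h2 rfl).1
    have hms : (↑(forcedL B gp ++ origL B gp k c.1) : Multiset ℕ) =
        (↑(forcedL B gp ++ origL B gp k c'.1) : Multiset ℕ) := by
      calc (↑(forcedL B gp ++ origL B gp k c.1) : Multiset ℕ)
          = ↑(midL B gp k c.1) := (Multiset.sort_eq _ _).symm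
        _ = ↑(midL B gp k c'.1) := by rw [hmid]
        _ = ↑(forcedL B gp ++ origL B gp k c'.1) := Multiset.sort_eq _ _
    have horig : (↑(origL B gp k c.1) : Multiset ℕ) = (↑(origL B gp k c'.1) : Multiset ℕ) := by
      have hms2 : (↑(forcedL B gp) : Multiset ℕ) + ↑(origL B gp k c.1) =
          (↑(forcedL B gp) : Multiset ℕ) + ↑(origL B gp k c'.1) := by
        rw [← Multiset.coe_add, ← Multiset.coe_add] at hms
        exact hms
      exact add_left_cancel hms2
    have hlisteq : origL B gp k c.1 = origL B gp k c'.1 :=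
      List.Perm.eq_of_sortedLE (List.sortedLE_iff_pairwise.mpr (sorted_origL B gp k c.1))
        (List.sortedLE_iff_pairwise.mpr (sorted_origL B gp k c'.1)) (Multiset.coe_eq_coe.mp horig)
    have hps : ∀ j, j < k - 1 → psum c.1 (j+1) = psum c'.1 (j+1) := by
      intro j hj
      have hjl : j < (origL B gp k c.1).length := by simp [origL]; omega
      have hjl' : j < (origL B gp k c'.1).length := by simp [origL]; omega
      have hel : (origL B gp k c.1)[j] = (origL B gp k c'.1)[j] := by
        simp only [hlisteq]
      simp only [origL, List.getElem_map, List.getElem_range] at hel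
      exact psiF_inj hel
    have hps' : ∀ m, m ≤ k → psum c.1 m = psum c'.1 m := by
      intro m hm
      rcases Nat.eq_zero_or_pos m with rfl | hm1
      · rw [psum_zero, psum_zero]
      rcases eq_or_lt_of_le hm with rfl | hmk
      · rw [psum_top, psum_top, c.2, c'.2]
      have := hps (m-1) (by omega)
      rwa [Nat.sub_add_cancel hm1] at this
    apply Subtype.ext; funext i
    have e1 := psum_succ c.1 i.isLt
    have e2 := psum_succ c'.1 i.isLt
    simp only [Fin.eta] at e1 e2
    have p1 := hps' (i.1+1) (by omega)
    have p2 := hps' i.1 (by omega)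
    omega
  exact Nat.card_le_card_of_injective _ hinj

end OPBaux

open OPBaux in
/-- The number of ordered partitions of `N` into `g` parts from `[0,B]` is at least
`C(N - 2g' + g - 1, g - g' - 1)` where `g' = ⌊N/B⌋`. -/
theorem ordered_partitions_bounded_parts_lower_bound (N g B : ℕ) (hB : 0 < B)
    (hg : N / B + 1 ≤ g) (hN : 2 * (N / B) ≤ N) :
    Nat.choose (N - 2 * (N / B) + g - 1) (g - N / B - 1) ≤
      Nat.card {a : Fin g → ℕ // (∀ i, a i ≤ B) ∧ ∑ i, a i = N} := by
  have hdiv : N / B ≤ N := Nat.div_le_self N B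
  set gp := N / B with hgp
  set k := g - gp with hkdef
  set S := N - gp with hSdef
  have hk : 0 < k := by omega
  have h1 : N - 2 * gp + g - 1 = S + k - 1 := by omega
  have h2 : g - gp - 1 = k - 1 := by omega
  rw [h1, h2, ← card_comps k S hk]
  exact key B gp k S N g hB hgp (by omega) (by omega) hk
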